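/- Rigidity theorem for the 3-diagonal map on octagons with 4-fold rotational symmetry: suppose (x,y) ∈ ℝ² and there exists a bi-infinite sequence (p_j)_{j∈ℤ} of points of ℝ² with p_0 = (x,y) such that, for every j ∈ ℤ, T is defined at p_j, T(p_j) = p_{j+1}, and P(p_j) is convex. Then (x,y) = (1/√2, 1/√2), i.e. P(x,y) is the regular octagon. Conversely, (1/√2, 1/√2) is a fixed point of T and P(1/√2, 1/√2) is convex. -/

import Mathlib

/-- Denominator whose nonvanishing defines the domain of the 3-diagonal map `T`. -/
noncomputable def tDen (x y : ℝ) : ℝ :=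
  (1 + (x + y)) *
    ((x ^ 2 + y ^ 2) + 2 * (x ^ 3 + y ^ 3) + (x ^ 4 + y ^ 4)
      - 2 * (x * y) - 2 * (x * y ^ 2 + y * x ^ 2) + 2 * (x ^ 2 * y ^ 2))

/-- The coefficient `A` of the 3-diagonal pentagram map. -/
noncomputable def tA (x y : ℝ) : ℝ := ((x + y) + (x ^ 2 + y ^ 2)) / tDen x y

/-- The quantity `B` of the 3-diagonal pentagram map. -/
noncomputable def tB (x y : ℝ) : ℝ :=
  (x - y) + 2 * (x ^ 2 - y ^ 2) + (x ^ 3 - y ^ 3) + (x * y ^ 2 - y * x ^ 2)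

/-- The 3-diagonal pentagram map on octagons with 4-fold rotational symmetry,
in coordinates: `T(x,y) = (-Ax(B - 2xy), Ay(B + 2xy))`. -/
noncomputable def T (p : ℝ × ℝ) : ℝ × ℝ :=
  (-(tA p.1 p.2) * p.1 * (tB p.1 p.2 - 2 * p.1 * p.2),
    (tA p.1 p.2) * p.2 * (tB p.1 p.2 + 2 * p.1 * p.2))

/-- The vertices of the octagon `P(x,y)` with 4-fold rotational symmetry. -/
def octVerts (x y : ℝ) : Fin 8 → ℝ × ℝ :=
  ![(1, 0), (x, y), (0, 1), (-y, x), (-1, 0), (-x, -y), (0, -1), (y, -x)]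

/-- Cross product (2x2 determinant) of two planar vectors. -/
def cross2 (a b : ℝ × ℝ) : ℝ := a.1 * b.2 - a.2 * b.1

/-- The octagon `P(x,y)` is convex: each successive cross product is positive. -/
def ConvexOct (x y : ℝ) : Prop :=
  ∀ i : Fin 8,
    0 < cross2 (octVerts x y (i + 1) - octVerts x y i)
        (octVerts x y (i + 2) - octVerts x y (i + 1))

lemma convexOct_iff (x y : ℝ) :
    ConvexOct x y ↔ 1 < x + y ∧ x ^ 2 + y ^ 2 < x + y := by
  have e0 : octVerts x y 0 = (1,0) := rfl
  have e1 : octVerts x y 1 = (x,y) := rfl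
  have e2 : octVerts x y 2 = (0,1) := rfl
  have e3 : octVerts x y 3 = (-y,x) := rfl
  have e4 : octVerts x y 4 = (-1,0) := rfl
  have e5 : octVerts x y 5 = (-x,-y) := rfl
  have e6 : octVerts x y 6 = (0,-1) := rfl
  have e7 : octVerts x y 7 = (y,-x) := rfl
  constructor
  · intro h
    have h0 := h 0
    have h1 := h 1
    simp [cross2, Prod.sub_def, e0, e1, e2, e3] at h0 h1
    constructor <;> nlinarith [h0, h1]
  · rintro ⟨h1, h2⟩ i
    fin_cases i <;>
      simp [cross2, Prod.sub_def, e0, e1, e2, e3, e4, e5, e6, e7] <;>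
      nlinarith

lemma key1 (x y : ℝ) (hD : tDen x y ≠ 0) :
    ((T (x,y)).1^2 + (T (x,y)).2^2 - 1) * (1 + (x+y)) =
      -((x^2+y^2) - 1) * ((T (x,y)).1 + (T (x,y)).2 - 1) := by
  unfold T tA tB at *
  field_simp
  unfold tDen
  ring

lemma key2 (x y : ℝ) (hD : tDen x y ≠ 0) :
    ((T (x,y)).1 - (T (x,y)).2) * tDen x y =
      -(x-y) * (1+(x+y)) * ((x+y)+(x^2+y^2))^2 := by
  unfold T tA tB at *
  field_simp
  ring

set_option maxHeartbeats 1000000 in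
/-- Rigidity: if `P(x,y)` admits a bi-infinite `T`-orbit of convex octagons then
`P(x,y)` is the regular octagon, i.e. `(x,y) = (1/√2, 1/√2)`; conversely
`(1/√2, 1/√2)` is a convex fixed point of `T`. -/
theorem octagon_rigidity :
    (∀ x y : ℝ,
      (∃ p : ℤ → ℝ × ℝ, p 0 = (x, y) ∧
        ∀ j : ℤ, tDen (p j).1 (p j).2 ≠ 0 ∧ T (p j) = p (j + 1) ∧
          ConvexOct (p j).1 (p j).2) →
      (x, y) = (1 / Real.sqrt 2, 1 / Real.sqrt 2)) ∧
    tDen (1 / Real.sqrt 2) (1 / Real.sqrt 2) ≠ 0 ∧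
    T (1 / Real.sqrt 2, 1 / Real.sqrt 2) = (1 / Real.sqrt 2, 1 / Real.sqrt 2) ∧
    ConvexOct (1 / Real.sqrt 2) (1 / Real.sqrt 2) := by
  have hs2' : (0:ℝ) < Real.sqrt 2 := Real.sqrt_pos.mpr (by norm_num)
  have hsqrt2 : Real.sqrt 2 ^ 2 = 2 := Real.sq_sqrt (by norm_num : (0:ℝ) ≤ 2)
  have hsqrt_gt : 1 < Real.sqrt 2 := by nlinarith [hsqrt2, hs2']
  refine ⟨?_, ?_, ?_, ?_⟩
  · -- rigidity
    rintro x y ⟨p, hp0, hall⟩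
    have hD : ∀ j : ℤ, tDen (p j).1 (p j).2 ≠ 0 := fun j => (hall j).1
    have hT : ∀ j : ℤ, T ((p j).1, (p j).2) = p (j+1) := fun j => (hall j).2.1
    have hC : ∀ j : ℤ, 1 < (p j).1 + (p j).2 ∧ (p j).1^2+(p j).2^2 < (p j).1+(p j).2 :=
      fun j => (convexOct_iff _ _).1 (hall j).2.2
    have hs1 : ∀ j : ℤ, 1 < (p j).1 + (p j).2 := fun j => (hC j).1
    have hqs : ∀ j : ℤ, (p j).1^2+(p j).2^2 < (p j).1+(p j).2 := fun j => (hC j).2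
    have hs2 : ∀ j : ℤ, (p j).1 + (p j).2 < 2 := by
      intro j; nlinarith [sq_nonneg ((p j).1-(p j).2), hs1 j, hqs j]
    have hq_lb : ∀ j : ℤ, 1/2 < (p j).1^2+(p j).2^2 := by
      intro j; nlinarith [sq_nonneg ((p j).1-(p j).2), hs1 j]
    have hq_ub : ∀ j : ℤ, (p j).1^2+(p j).2^2 < 2 := fun j => lt_trans (hqs j) (hs2 j)
    -- key relation R1
    have R1 : ∀ j : ℤ, ((p (j+1)).1^2+(p (j+1)).2^2 - 1) * (1 + ((p j).1+(p j).2))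
        = -((p j).1^2+(p j).2^2 - 1) * ((p (j+1)).1 + (p (j+1)).2 - 1) := by
      intro j
      have h := key1 (p j).1 (p j).2 (hD j)
      rw [hT j] at h
      linear_combination h
    -- contraction of |q-1|
    have hcontr : ∀ j : ℤ, |(p (j+1)).1^2+(p (j+1)).2^2 - 1| ≤
        (1/2) * |(p j).1^2+(p j).2^2 - 1| := by
      intro j
      have h1 : (0:ℝ) < 1 + ((p j).1+(p j).2) := by linarith [hs1 j]
      have h2 : (0:ℝ) < (p (j+1)).1 + (p (j+1)).2 - 1 := by linarith [hs1 (j+1)]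
      have h3 := congrArg abs (R1 j)
      rw [abs_mul, abs_of_pos h1, abs_mul, abs_neg, abs_of_pos h2] at h3
      have hA := abs_nonneg ((p (j+1)).1^2+(p (j+1)).2^2 - 1)
      have hB := abs_nonneg ((p j).1^2+(p j).2^2 - 1)
      nlinarith [hs1 j, hs2 (j+1), h3]
    have hbd1 : ∀ j : ℤ, |(p j).1^2+(p j).2^2 - 1| ≤ 1 := by
      intro j
      rw [abs_le]; constructor <;> nlinarith [hq_lb j, hq_ub j]
    -- backward iteration: q 0 = 1
    have hdecay : ∀ n : ℕ, ∀ j : ℤ, |(p (j+n)).1^2+(p (j+n)).2^2 - 1| ≤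
        (1/2)^n * |(p j).1^2+(p j).2^2 - 1| := by
      intro n
      induction n with
      | zero => intro j; simp
      | succ n ih =>
        intro j
        have e : (j + ((n:ℤ)+1)) = (j+1) + (n:ℤ) := by ring
        have h1 := ih (j+1)
        have h2 := hcontr j
        calc |(p (j+(n+1:ℕ))).1^2+(p (j+(n+1:ℕ))).2^2 - 1|
            = |(p ((j+1)+(n:ℤ))).1^2+(p ((j+1)+(n:ℤ))).2^2 - 1| := by
              push_cast; rw [e]
          _ ≤ (1/2)^n * |(p (j+1)).1^2+(p (j+1)).2^2 - 1| := h1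
          _ ≤ (1/2)^n * ((1/2) * |(p j).1^2+(p j).2^2 - 1|) := by
              apply mul_le_mul_of_nonneg_left h2 (by positivity)
          _ = (1/2)^(n+1) * |(p j).1^2+(p j).2^2 - 1| := by ring
    have hq0 : (p 0).1^2 + (p 0).2^2 = 1 := by
      have hsmall : ∀ n : ℕ, |(p 0).1^2+(p 0).2^2 - 1| ≤ (1/2)^n := by
        intro n
        have h := hdecay n (-(n:ℤ))
        have e : (-(n:ℤ) + (n:ℤ)) = 0 := by ring
        rw [e] at h
        calc |(p 0).1^2+(p 0).2^2 - 1| ≤ (1/2)^n * |(p (-(n:ℤ))).1^2+(p (-(n:ℤ))).2^2 - 1| := h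
          _ ≤ (1/2)^n * 1 := by
              apply mul_le_mul_of_nonneg_left (hbd1 _) (by positivity)
          _ = (1/2)^n := by ring
      by_contra hne
      have hpos : 0 < |(p 0).1^2+(p 0).2^2 - 1| := by
        apply abs_pos.mpr; intro h; exact hne (by linarith [h] )
      obtain ⟨n, hn⟩ := exists_pow_lt_of_lt_one hpos (by norm_num : (1:ℝ)/2 < 1)
      linarith [hsmall n, hn]
    -- forward: circle invariant
    have hq : ∀ n : ℕ, (p (n:ℤ)).1^2 + (p (n:ℤ)).2^2 = 1 := by
      intro n
      induction n with
      | zero => exact_mod_cast hq0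
      | succ n ih =>
        have h := R1 (n:ℤ)
        have h1 : (0:ℝ) < 1 + ((p (n:ℤ)).1+(p (n:ℤ)).2) := by linarith [hs1 (n:ℤ)]
        have e : ((n:ℤ)+1) = ((n+1:ℕ):ℤ) := by push_cast; ring
        rw [ih] at h
        rw [e] at h
        have : ((p ((n+1:ℕ):ℤ)).1^2+(p ((n+1:ℕ):ℤ)).2^2 - 1) = 0 := by
          rcases mul_eq_zero.mp (by linarith [h] :
            ((p ((n+1:ℕ):ℤ)).1^2+(p ((n+1:ℕ):ℤ)).2^2 - 1) * (1 + ((p (n:ℤ)).1+(p (n:ℤ)).2)) = 0)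
            with h' | h'
          · exact h'
          · exact absurd h' (by linarith)
        linarith [this]
    -- d dynamics on the circle
    have hsd : ∀ n : ℕ, ((p (n:ℤ)).1+(p (n:ℤ)).2)^2 + ((p (n:ℤ)).1-(p (n:ℤ)).2)^2 = 2 := by
      intro n; linear_combination 2 * hq n
    have h3s : ∀ n : ℕ, 0 < 3 - 2*((p (n:ℤ)).1+(p (n:ℤ)).2) := by
      intro n
      nlinarith [hsd n, hs1 (n:ℤ), sq_nonneg ((p (n:ℤ)).1-(p (n:ℤ)).2)]
    have hd1 : ∀ n : ℕ, ((p (n:ℤ)).1-(p (n:ℤ)).2)^2 < 1 := by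
      intro n; nlinarith [hsd n, hs1 (n:ℤ)]
    have R2 : ∀ n : ℕ, ((p ((n:ℤ)+1)).1 - (p ((n:ℤ)+1)).2) *
        (3 - 2*((p (n:ℤ)).1+(p (n:ℤ)).2)) = -((p (n:ℤ)).1 - (p (n:ℤ)).2) := by
      intro n
      have h := key2 (p (n:ℤ)).1 (p (n:ℤ)).2 (hD (n:ℤ))
      rw [hT (n:ℤ)] at h
      have hq1 := hq n
      have h1 : (0:ℝ) < 1 + ((p (n:ℤ)).1+(p (n:ℤ)).2) := by linarith [hs1 (n:ℤ)]
      have hden : tDen (p (n:ℤ)).1 (p (n:ℤ)).2 =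
          (1 + ((p (n:ℤ)).1+(p (n:ℤ)).2))^3 * (3 - 2*((p (n:ℤ)).1+(p (n:ℤ)).2)) := by
        unfold tDen
        linear_combination ((1 + ((p (n:ℤ)).1+(p (n:ℤ)).2)) *
          ((p (n:ℤ)).1^2+(p (n:ℤ)).2^2 + 4*((p (n:ℤ)).1+(p (n:ℤ)).2) + 3)) * hq1
      rw [hden] at h
      apply mul_left_cancel₀ (pow_ne_zero 3 h1.ne')
      linear_combination h - (((p (n:ℤ)).1-(p (n:ℤ)).2) * (1 + ((p (n:ℤ)).1+(p (n:ℤ)).2)) *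
        (((p (n:ℤ)).1^2+(p (n:ℤ)).2^2) + 1 + 2*((p (n:ℤ)).1+(p (n:ℤ)).2))) * hq1
    -- |d| ≤ 1/5 always
    have hbound : ∀ n : ℕ, |(p (n:ℤ)).1-(p (n:ℤ)).2| ≤ 1/5 := by
      intro n
      by_contra hcon
      push_neg at hcon
      have e : ((n:ℤ)+1) = ((n+1:ℕ):ℤ) := by push_cast; ring
      have hR := R2 n
      rw [e] at hR
      have hcirc := hsd n
      have hdlt := hd1 n
      have hslt := hs1 (n:ℤ)
      have hu := h3s n
      have hA := hsd (n+1)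
      have hB := hs1 ((n+1:ℕ):ℤ)
      have habs := sq_abs ((p (n:ℤ)).1-(p (n:ℤ)).2)
      have hann := abs_nonneg ((p (n:ℤ)).1-(p (n:ℤ)).2)
      set sn : ℝ := (p (n:ℤ)).1+(p (n:ℤ)).2 with hsn
      set dn : ℝ := (p (n:ℤ)).1-(p (n:ℤ)).2 with hdn
      set sm : ℝ := (p ((n+1:ℕ):ℤ)).1+(p ((n+1:ℕ):ℤ)).2 with hsm
      set dm : ℝ := (p ((n+1:ℕ):ℤ)).1-(p ((n+1:ℕ):ℤ)).2 with hdm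
      clear_value sn dn sm dm
      have h5 : 1/25 < dn^2 := by
        rw [← sq_abs]
        calc (1/25:ℝ) = (1/5)^2 := by norm_num
          _ < |dn|^2 := by
              exact pow_lt_pow_left₀ hcon (by norm_num) (by norm_num)
      have hsq : dm^2 * (3 - 2*sn)^2 = dn^2 := by
        linear_combination (dm * (3 - 2*sn) - dn) * hR
      have hprod : 0 < (1 - dn^2) * (25*dn^2 - 1) :=
        mul_pos (by linarith) (by linarith)
      have h12 : 17 - 5*dn^2 < 12*sn := by
        nlinarith [hprod, hcirc, hslt]
      have husq : (3 - 2*sn)^2 < dn^2 := by nlinarith [h12, hcirc]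
      have hdn1 : 1 < dm^2 := by
        nlinarith [hsq, husq, sq_nonneg (3 - 2*sn)]
      nlinarith [hA, hB, hdn1]
    -- growth
    have hgrow : ∀ n : ℕ, 5 * |(p (n:ℤ)).1-(p (n:ℤ)).2| ≤ |(p ((n+1:ℕ):ℤ)).1-(p ((n+1:ℕ):ℤ)).2| := by
      intro n
      have hb := hbound n
      have hd2 : ((p (n:ℤ)).1-(p (n:ℤ)).2)^2 ≤ 1/25 := by
        nlinarith [sq_abs ((p (n:ℤ)).1-(p (n:ℤ)).2), hb, abs_nonneg ((p (n:ℤ)).1-(p (n:ℤ)).2)]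
      have hs75 : 7/5 ≤ (p (n:ℤ)).1+(p (n:ℤ)).2 := by
        nlinarith [hsd n, hs1 (n:ℤ), hd2]
      have h35 : 3 - 2*((p (n:ℤ)).1+(p (n:ℤ)).2) ≤ 1/5 := by linarith
      have habs := congrArg abs (R2 n)
      rw [abs_mul, abs_neg, abs_of_pos (h3s n)] at habs
      have e : ((n:ℤ)+1) = ((n+1:ℕ):ℤ) := by push_cast; ring
      rw [e] at habs
      have hnn := abs_nonneg ((p ((n+1:ℕ):ℤ)).1-(p ((n+1:ℕ):ℤ)).2)
      nlinarith [habs, h35, h3s n, hnn]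
    have hgrowth : ∀ n : ℕ, 5^n * |(p 0).1-(p 0).2| ≤ |(p (n:ℤ)).1-(p (n:ℤ)).2| := by
      intro n
      induction n with
      | zero => simp
      | succ n ih =>
        calc 5^(n+1) * |(p 0).1-(p 0).2| = 5 * (5^n * |(p 0).1-(p 0).2|) := by ring
          _ ≤ 5 * |(p (n:ℤ)).1-(p (n:ℤ)).2| := by linarith [ih]
          _ ≤ |(p ((n+1:ℕ):ℤ)).1-(p ((n+1:ℕ):ℤ)).2| := hgrow n
    have hd0 : (p 0).1 = (p 0).2 := by
      by_contra hne
      have hpos : 0 < |(p 0).1-(p 0).2| := abs_pos.mpr (sub_ne_zero.mpr hne)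
      obtain ⟨n, hn⟩ := pow_unbounded_of_one_lt (1 / |(p 0).1-(p 0).2|)
        (by norm_num : (1:ℝ) < 5)
      have h1 := hgrowth n
      have h2 := hbound n
      have : 1 < 5^n * |(p 0).1-(p 0).2| := by
        rw [div_lt_iff₀ hpos] at hn
        calc (1:ℝ) = 1 := rfl
          _ < 5^n * |(p 0).1-(p 0).2| := by linarith [hn]
      linarith [h1, h2, this]
    -- conclude
    have hx0 : (p 0).1 = x := by rw [hp0]
    have hy0 : (p 0).2 = y := by rw [hp0]
    have hxy : x = y := by rw [← hx0, ← hy0]; exact hd0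
    have hcirc : x^2 + y^2 = 1 := by rw [← hx0, ← hy0]; exact hq0
    have hsum : 1 < x + y := by rw [← hx0, ← hy0]; exact hs1 0
    have hxpos : 0 < x := by nlinarith [hxy, hsum]
    have hxval : x * Real.sqrt 2 = 1 := by
      have hsq : (x * Real.sqrt 2)^2 = 1 := by
        rw [mul_pow, hsqrt2]; nlinarith [hcirc, hxy]
      have hp : 0 < x * Real.sqrt 2 := by positivity
      nlinarith [hsq, hp, sq_nonneg (x * Real.sqrt 2 - 1)]
    have hxv : x = 1 / Real.sqrt 2 := by
      rw [eq_div_iff hs2'.ne']; exact hxval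
    rw [Prod.mk.injEq]
    exact ⟨hxv, hxy ▸ hxv⟩
  · -- tDen ≠ 0 at fixed point
    set a : ℝ := 1 / Real.sqrt 2 with ha
    have ha0 : 0 < a := by positivity
    have ha2 : a ^ 2 = 1 / 2 := by
      rw [ha, div_pow, one_pow, hsqrt2]
    have hden : tDen a a = 1 + 2 * a := by
      unfold tDen
      linear_combination (2 * (1 + 2*a) * (2*a^2+1)) * ha2
    rw [hden]; positivity
  · -- fixed point
    set a : ℝ := 1 / Real.sqrt 2 with ha
    have ha0 : 0 < a := by positivity
    have ha2 : a ^ 2 = 1 / 2 := by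
      rw [ha, div_pow, one_pow, hsqrt2]
    have hden : tDen a a = 1 + 2 * a := by
      unfold tDen
      linear_combination (2 * (1 + 2*a) * (2*a^2+1)) * ha2
    have hA : tA a a = 1 := by
      rw [tA, hden, div_eq_one_iff_eq (by positivity)]
      linear_combination 2 * ha2
    have hB : tB a a = 0 := by unfold tB; ring
    rw [show T (a,a) = (-(tA a a) * a * (tB a a - 2*a*a), (tA a a) * a * (tB a a + 2*a*a)) from rfl,
      hA, hB, Prod.mk.injEq]
    constructor <;> linear_combination 2 * a * ha2
  · -- convexity of regular octagon
    rw [convexOct_iff]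
    constructor
    · rw [← add_div]
      rw [lt_div_iff₀ hs2']
      nlinarith [hsqrt_gt]
    · have : (1 / Real.sqrt 2)^2 + (1 / Real.sqrt 2)^2 = 1 := by
        rw [div_pow, one_pow, hsqrt2]; norm_num
      rw [this, ← add_div, lt_div_iff₀ hs2']
      nlinarith [hsqrt_gt]
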